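/- Let L be a geometric lattice of finite height and let B be a set of atoms of L. Let ℒ(B) be the subposet {⋁_L F : F a finite subset of B} of L (in particular 0 ∈ ℒ(B), as the empty join). Then ℒ(B) is itself a geometric lattice of finite height, its least element is 0_L, and its set of atoms is exactly B. -/

import Mathlib

universe u

/-- An element of a poset is an *atom* (point) if it is an upper cover of a least element. -/
def IsAtomP {P : Type*} [PartialOrder P] (a : P) : Prop :=
  ∃ z : P, (∀ w, z ≤ w) ∧ z ⋖ a

/-- An element of a poset is a *coatom* (hyperplane) if it is a lower cover of a greatest
element. -/
def IsCoatomP {P : Type*} [PartialOrder P] (a : P) : Prop :=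
  ∃ z : P, (∀ w, w ≤ z) ∧ a ⋖ z

/-- A partial order is a *geometric lattice of finite height* if it is a lattice
(binary joins and meets exist), has no infinite chains, is semimodular, and every
element is a join (least upper bound) of a set of atoms. -/
def IsGeomLatFH (P : Type*) [PartialOrder P] : Prop :=
  (∀ x y : P, ∃ z, IsLUB {x, y} z) ∧
  (∀ x y : P, ∃ z, IsGLB {x, y} z) ∧
  (∀ c : Set P, IsChain (· ≤ ·) c → c.Finite) ∧
  (∀ a b c : P, a ⋖ b → a ⋖ c → b ≠ c → ∃ d, b ⋖ d ∧ c ⋖ d) ∧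
  (∀ x : P, ∃ S : Set P, (∀ a ∈ S, IsAtomP a) ∧ IsLUB S x)

/-- `r` is the rank (height) function of a graded bounded poset: `r ⊥ = 0` and `r`
increases by exactly one across covering pairs. -/
def IsRankFn {L : Type*} [PartialOrder L] [OrderBot L] (r : L → ℕ) : Prop :=
  r ⊥ = 0 ∧ ∀ x y : L, x ⋖ y → r y = r x + 1

/-- A *matching* of a lattice: an injection from atoms to coatoms (hyperplanes) such
that each atom lies below its image. -/
def HasMatching (L : Type*) [CompleteLattice L] : Prop :=
  ∃ f : {a : L // IsAtom a} → {h : L // IsCoatom h},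
    Function.Injective f ∧ ∀ a : {a : L // IsAtom a}, (a : L) ≤ ((f a : {h : L // IsCoatom h}) : L)

/-- `joinClosure B` is the subposet `ℒ(B)` of all joins of finite subsets of `B`. -/
def joinClosure {L : Type*} [CompleteLattice L] (B : Set L) : Set L :=
  {x | ∃ F : Finset L, ↑F ⊆ B ∧ x = sSup (↑F : Set L)}

section Aux
variable {L : Type u} [CompleteLattice L]

lemma finChains_wf (h : ∀ c : Set L, IsChain (· ≤ ·) c → c.Finite)
    (r : L → L → Prop) [IsStrictOrder L r] (hr : ∀ a b, r a b → a < b ∨ b < a) :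
    WellFounded r := by
  rw [RelEmbedding.wellFounded_iff_isEmpty]
  constructor
  intro f
  have hc : IsChain (· ≤ ·) (Set.range f) := by
    rintro _ ⟨m, rfl⟩ _ ⟨n, rfl⟩ _
    rcases lt_trichotomy m n with h' | h' | h'
    · rcases hr _ _ (f.map_rel_iff.2 h') with h'' | h''
      · exact Or.inr h''.le
      · exact Or.inl h''.le
    · exact Or.inl (h' ▸ le_refl _)
    · rcases hr _ _ (f.map_rel_iff.2 h') with h'' | h''
      · exact Or.inl h''.le
      · exact Or.inr h''.le
  exact Set.infinite_range_of_injective f.injective (h _ hc)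
end Aux

section Aux2
variable {L : Type u} [CompleteLattice L]

lemma sSup_eq_finset (hwf : WellFounded ((· > ·) : L → L → Prop)) (S : Set L) :
    ∃ F : Finset L, ↑F ⊆ S ∧ sSup (↑F : Set L) = sSup S := by
  classical
  set T : Set L := {x | ∃ F : Finset L, ↑F ⊆ S ∧ x = sSup (↑F : Set L)} with hT
  have hne : T.Nonempty := ⟨sSup (↑(∅ : Finset L) : Set L), ∅, by simp, rfl⟩
  obtain ⟨m, hm, hmax⟩ := hwf.has_min T hne
  obtain ⟨F, hFS, rfl⟩ := hm
  refine ⟨F, hFS, le_antisymm (sSup_le_sSup hFS) (sSup_le fun s hs => ?_)⟩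
  have hmem : sSup (↑(insert s F) : Set L) ∈ T :=
    ⟨insert s F, by rw [Finset.coe_insert]; exact Set.insert_subset hs hFS, rfl⟩
  have hle : sSup (↑F : Set L) ≤ sSup (↑(insert s F) : Set L) :=
    sSup_le_sSup (by rw [Finset.coe_insert]; exact Set.subset_insert _ _)
  have heq : sSup (↑F : Set L) = sSup (↑(insert s F) : Set L) :=
    hle.lt_or_eq.resolve_left (hmax _ hmem)
  calc s ≤ sSup (↑(insert s F) : Set L) := le_sSup (by simp)
    _ = sSup (↑F : Set L) := heq.symm

lemma diamond (hsm : ∀ a b c : L, a ⋖ b → a ⋖ c → b ≠ c → ∃ d, b ⋖ d ∧ c ⋖ d)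
    {a b c : L} (hab : a ⋖ b) (hac : a ⋖ c) (hbc : b ≠ c) :
    b ⋖ b ⊔ c ∧ c ⋖ b ⊔ c := by
  obtain ⟨d, hbd, hcd⟩ := hsm a b c hab hac hbc
  have h1 : b ⊔ c = b ∨ b ⊔ c = d :=
    hbd.wcovBy.eq_or_eq le_sup_left (sup_le hbd.lt.le hcd.lt.le)
  rcases h1 with h1 | h1
  · exfalso
    have hcb : c ≤ b := sup_eq_left.1 h1
    have : c < b := lt_of_le_of_ne hcb hbc.symm
    exact hab.2 hac.lt this
  · rw [h1]; exact ⟨hbd, hcd⟩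

lemma covBy_sup_atom (hwfLT : WellFounded ((· < ·) : L → L → Prop))
    (hwfGT : WellFounded ((· > ·) : L → L → Prop))
    (hsm : ∀ a b c : L, a ⋖ b → a ⋖ c → b ≠ c → ∃ d, b ⋖ d ∧ c ⋖ d) :
    ∀ a p : L, IsAtom p → ¬ p ≤ a → a ⋖ a ⊔ p := by
  intro a
  induction a using hwfLT.induction with
  | _ a IH =>
  intro p hp hpa
  by_cases ha : a = ⊥
  · subst ha; simpa using hp.bot_covBy
  · obtain ⟨a', ha'⟩ : ∃ a', a' ⋖ a := by
      obtain ⟨m, hm, hmax⟩ := hwfGT.has_min {x | x < a} ⟨⊥, bot_lt_iff_ne_bot.2 ha⟩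
      exact ⟨m, hm, fun c hmc hca => hmax c hca hmc⟩
    have hpa' : ¬ p ≤ a' := fun h => hpa (h.trans ha'.lt.le)
    have h1 : a' ⋖ a' ⊔ p := IH a' ha'.lt p hp hpa'
    have hne : a ≠ a' ⊔ p := fun h => hpa (h ▸ le_sup_right)
    have h2 := (diamond hsm ha' h1 hne).1
    have h3 : a ⊔ (a' ⊔ p) = a ⊔ p := by
      rw [← sup_assoc, sup_eq_left.2 ha'.lt.le]
    rwa [h3] at h2
end Aux2

section Main
variable {L : Type u} [CompleteLattice L] {B : Set L}

lemma bot_mem_joinClosure : (⊥ : L) ∈ joinClosure B :=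
  ⟨∅, by simp, by simp⟩

lemma singleton_mem_joinClosure {b : L} (hb : b ∈ B) : b ∈ joinClosure B :=
  ⟨{b}, by simp [hb], by simp⟩

lemma sup_mem_joinClosure {x y : L} (hx : x ∈ joinClosure B) (hy : y ∈ joinClosure B) :
    x ⊔ y ∈ joinClosure B := by
  classical
  obtain ⟨F, hF, rfl⟩ := hx; obtain ⟨G, hG, rfl⟩ := hy
  exact ⟨F ∪ G, by rw [Finset.coe_union]; exact Set.union_subset hF hG,
    by rw [Finset.coe_union, sSup_union]⟩

lemma mem_joinClosure_of_subset (hwf : WellFounded ((· > ·) : L → L → Prop))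
    {S : Set L} (hS : S ⊆ B) : sSup S ∈ joinClosure B := by
  obtain ⟨F, hF, h⟩ := sSup_eq_finset hwf S
  exact ⟨F, hF.trans hS, h.symm⟩

lemma exists_atom_lt {x y : L} (hy : y ∈ joinClosure B) (hxy : x < y) :
    ∃ p ∈ B, p ≤ y ∧ ¬ p ≤ x := by
  obtain ⟨G, hG, rfl⟩ := hy
  by_contra h
  push_neg at h
  exact absurd (sSup_le fun p hp => h p (hG hp) (le_sSup hp)) hxy.not_ge

lemma covBy_subtype_of_covBy {x y : ↥(joinClosure B)} (h : (x : L) ⋖ (y : L)) : x ⋖ y :=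
  ⟨Subtype.coe_lt_coe.1 h.lt,
   fun c h1 h2 => h.2 (Subtype.coe_lt_coe.2 h1) (Subtype.coe_lt_coe.2 h2)⟩

lemma covBy_of_covBy_subtype (hwfLT : WellFounded ((· < ·) : L → L → Prop))
    (hwfGT : WellFounded ((· > ·) : L → L → Prop))
    (hsm : ∀ a b c : L, a ⋖ b → a ⋖ c → b ≠ c → ∃ d, b ⋖ d ∧ c ⋖ d)
    (hB : ∀ b ∈ B, IsAtom b)
    {x y : ↥(joinClosure B)} (h : x ⋖ y) : (x : L) ⋖ (y : L) := by
  have hlt : (x : L) < y := Subtype.coe_lt_coe.2 h.lt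
  obtain ⟨p, hpB, hpy, hpx⟩ := exists_atom_lt y.2 hlt
  have hmem : (x : L) ⊔ p ∈ joinClosure B :=
    sup_mem_joinClosure x.2 (singleton_mem_joinClosure hpB)
  have hcov : (x : L) ⋖ (x : L) ⊔ p := covBy_sup_atom hwfLT hwfGT hsm _ p (hB p hpB) hpx
  have hle : (x : L) ⊔ p ≤ y := sup_le hlt.le hpy
  have hcase : (⟨(x : L) ⊔ p, hmem⟩ : ↥(joinClosure B)) = x ∨
      (⟨(x : L) ⊔ p, hmem⟩ : ↥(joinClosure B)) = y :=
    h.wcovBy.eq_or_eq (Subtype.coe_le_coe.1 le_sup_left) (Subtype.coe_le_coe.1 hle)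
  rcases hcase with hc | hc
  · exact absurd (le_sup_right.trans (congrArg Subtype.val hc).le) hpx
  · have : (x : L) ⊔ p = y := congrArg Subtype.val hc
    rwa [this] at hcov

end Main


/-- For a set `B` of atoms of a geometric lattice `L` of finite height, the subposet
`ℒ(B)` of joins of finite subsets of `B` is itself a geometric lattice of finite height,
its least element is `0_L`, and its set of atoms is exactly `B`. -/
theorem joinClosure_isGeomLatFH {L : Type u} [CompleteLattice L]
    (hL : IsGeomLatFH L) (B : Set L) (hB : ∀ b ∈ B, IsAtom b) :
    IsGeomLatFH ↥(joinClosure B) ∧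
    IsLeast (joinClosure B) ⊥ ∧
    (∀ x : ↥(joinClosure B), IsAtomP x ↔ (x : L) ∈ B) := by
  classical
  obtain ⟨-, -, hchain, hsm, -⟩ := hL
  have hwfLT : WellFounded ((· < ·) : L → L → Prop) :=
    finChains_wf hchain _ (fun a b h => Or.inl h)
  have hwfGT : WellFounded ((· > ·) : L → L → Prop) :=
    finChains_wf hchain _ (fun a b h => Or.inr h)
  let bot : ↥(joinClosure B) := ⟨⊥, bot_mem_joinClosure⟩
  have hbotle : ∀ w : ↥(joinClosure B), bot ≤ w := fun w => Subtype.coe_le_coe.1 bot_le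
  have hatomP : ∀ x : ↥(joinClosure B), IsAtomP x ↔ (x : L) ∈ B := by
    intro x
    constructor
    · rintro ⟨z, hz, hzx⟩
      have hzbot : z = bot := le_antisymm (hz bot) (hbotle z)
      subst hzbot
      obtain ⟨F, hF, hxF⟩ := x.2
      have hxne : (x : L) ≠ ⊥ := fun h => hzx.lt.ne (Subtype.ext h.symm)
      have hFne : F.Nonempty := by
        rcases F.eq_empty_or_nonempty with h | h
        · exact absurd (by rw [hxF, h]; simp) hxne
        · exact h
      obtain ⟨b, hb⟩ := hFne
      have hbB : b ∈ B := hF hb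
      have hble : b ≤ (x : L) := by rw [hxF]; exact le_sSup (Finset.mem_coe.2 hb)
      have hcase := hzx.wcovBy.eq_or_eq (c := ⟨b, singleton_mem_joinClosure hbB⟩)
        (Subtype.coe_le_coe.1 bot_le) (Subtype.coe_le_coe.1 hble)
      rcases hcase with hc | hc
      · exact absurd (congrArg Subtype.val hc) (hB b hbB).1
      · have hbx : b = (x : L) := congrArg Subtype.val hc
        rwa [← hbx]
    · intro hxB
      exact ⟨bot, hbotle, covBy_subtype_of_covBy (hB _ hxB).bot_covBy⟩
  refine ⟨⟨?_, ?_, ?_, ?_, ?_⟩, ⟨bot_mem_joinClosure, fun x _ => bot_le⟩, hatomP⟩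
  · -- binary joins
    intro x y
    refine ⟨⟨(x : L) ⊔ y, sup_mem_joinClosure x.2 y.2⟩, ?_, ?_⟩
    · rintro w (rfl | rfl)
      · exact Subtype.coe_le_coe.1 le_sup_left
      · exact Subtype.coe_le_coe.1 le_sup_right
    · intro u hu
      have hx : x ≤ u := hu (Set.mem_insert _ _)
      have hy : y ≤ u := hu (Set.mem_insert_iff.2 (Or.inr rfl))
      exact Subtype.coe_le_coe.1 (sup_le (Subtype.coe_le_coe.2 hx) (Subtype.coe_le_coe.2 hy))
  · -- binary meets
    intro x y
    set S : Set L := {p | p ∈ B ∧ p ≤ (x : L) ∧ p ≤ (y : L)} with hS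
    have hSB : S ⊆ B := fun p hp => hp.1
    refine ⟨⟨sSup S, mem_joinClosure_of_subset hwfGT hSB⟩, ?_, ?_⟩
    · rintro w (rfl | rfl)
      · exact Subtype.coe_le_coe.1 (sSup_le fun p hp => hp.2.1)
      · exact Subtype.coe_le_coe.1 (sSup_le fun p hp => hp.2.2)
    · intro w hw
      have hwx : (w : L) ≤ x := Subtype.coe_le_coe.2 (hw (Set.mem_insert _ _))
      have hwy : (w : L) ≤ y := Subtype.coe_le_coe.2 (hw (Set.mem_insert_iff.2 (Or.inr rfl)))
      obtain ⟨G, hG, hwG⟩ := w.2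
      refine Subtype.coe_le_coe.1 ?_
      show (w : L) ≤ sSup S
      rw [hwG]
      refine sSup_le fun p hp => le_sSup ?_
      have hpw : p ≤ (w : L) := by rw [hwG]; exact le_sSup hp
      exact ⟨hG hp, hpw.trans hwx, hpw.trans hwy⟩
  · -- chains are finite
    intro c hc
    have himg : IsChain (· ≤ ·) (Subtype.val '' c) :=
      hc.image_of_map_rel _ _ _ (fun _ _ h => Subtype.coe_le_coe.2 h)
    exact Set.Finite.of_finite_image (hchain _ himg)
      (Set.injOn_of_injective Subtype.val_injective)
  · -- semimodularity
    intro a b c hab hac hbc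
    have hab' : (a : L) ⋖ b := covBy_of_covBy_subtype hwfLT hwfGT hsm hB hab
    have hac' : (a : L) ⋖ c := covBy_of_covBy_subtype hwfLT hwfGT hsm hB hac
    have hbc' : (b : L) ≠ c := fun h => hbc (Subtype.ext h)
    obtain ⟨h1, h2⟩ := diamond hsm hab' hac' hbc'
    exact ⟨⟨(b : L) ⊔ c, sup_mem_joinClosure b.2 c.2⟩,
      covBy_subtype_of_covBy h1, covBy_subtype_of_covBy h2⟩
  · -- atomistic
    intro x
    obtain ⟨F, hF, hx⟩ := x.2
    refine ⟨{y : ↥(joinClosure B) | (y : L) ∈ F}, ?_, ?_, ?_⟩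
    · intro y hy
      exact (hatomP y).2 (hF hy)
    · intro y hy
      refine Subtype.coe_le_coe.1 ?_
      rw [show ((x : L) = sSup (↑F : Set L)) from hx]
      exact le_sSup hy
    · intro u hu
      refine Subtype.coe_le_coe.1 ?_
      show (x : L) ≤ u
      rw [hx]
      refine sSup_le fun b hb => ?_
      have hbmem : (⟨b, singleton_mem_joinClosure (hF hb)⟩ : ↥(joinClosure B)) ∈
          {y : ↥(joinClosure B) | (y : L) ∈ F} := hb
      exact Subtype.coe_le_coe.2 (hu hbmem)
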